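/- Let A be an integral rig and define x ⪯ y iff there exists m ∈ ℕ with x^m ≤ y (canonical order), and x ∼ y iff x ⪯ y and y ⪯ x. Then ∼ is a rig congruence on A. -/

import Mathlib

/-- The canonical pre-order of a rig. -/
def rigLe {A : Type*} [CommSemiring A] (x y : A) : Prop := ∃ w, w + x = y

/-- `x ⪯ y` iff some power of `x` is below `y`. -/
def preceq {A : Type*} [CommSemiring A] (x y : A) : Prop := ∃ m : ℕ, rigLe (x ^ m) y

/-- `x ∼ y` iff `x ⪯ y` and `y ⪯ x`. -/
def simRel {A : Type*} [CommSemiring A] (x y : A) : Prop := preceq x y ∧ preceq y x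

section aux

variable {A : Type*} [CommSemiring A] {ι : Type*}

lemma rigLe_refl (x : A) : rigLe x x := ⟨0, zero_add x⟩

lemma rigLe_trans {x y z : A} : rigLe x y → rigLe y z → rigLe x z
  | ⟨w, hw⟩, ⟨v, hv⟩ => ⟨v + w, by rw [add_assoc, hw, hv]⟩

lemma rigLe_add {a b c d : A} : rigLe a b → rigLe c d → rigLe (a + c) (b + d)
  | ⟨w, hw⟩, ⟨v, hv⟩ => ⟨w + v, by rw [← hw, ← hv]; ring⟩

lemma rigLe_mul {a b c d : A} : rigLe a b → rigLe c d → rigLe (a * c) (b * d)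
  | ⟨w, hw⟩, ⟨v, hv⟩ => ⟨w * v + w * c + a * v, by rw [← hw, ← hv]; ring⟩

lemma rigLe_pow {a b : A} (h : rigLe a b) (n : ℕ) : rigLe (a ^ n) (b ^ n) := by
  induction n with
  | zero => simpa using rigLe_refl (1 : A)
  | succ n ih => rw [pow_succ, pow_succ]; exact rigLe_mul ih h

lemma rigLe_add_left (a b : A) : rigLe a (b + a) := ⟨b, rfl⟩

lemma rigLe_add_right (a b : A) : rigLe a (a + b) := ⟨b, add_comm b a⟩

lemma rigLe_zero (a : A) : rigLe 0 a := ⟨a, add_zero a⟩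

variable (hint : ∀ x : A, 1 + x = 1)
include hint

lemma rigLe_one (a : A) : rigLe a 1 := ⟨1, hint a⟩

lemma add_idem' (a : A) : a + a = a := by
  have h1 : (1 : A) + 1 = 1 := hint 1
  calc a + a = a * (1 + 1) := by ring
    _ = a := by rw [h1, mul_one]

lemma rigLe_sup {a b c : A} (h1 : rigLe a c) (h2 : rigLe b c) : rigLe (a + b) c := by
  have := rigLe_add h1 h2
  rwa [add_idem' hint] at this

lemma rigLe_sum {s : Finset ι} {f : ι → A} {c : A} (h : ∀ i ∈ s, rigLe (f i) c) :
    rigLe (∑ i ∈ s, f i) c := by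
  classical
  induction s using Finset.induction_on with
  | empty => simpa using rigLe_zero c
  | insert _ _ hx ih =>
    rw [Finset.sum_insert hx]
    exact rigLe_sup hint (h _ (Finset.mem_insert_self _ _))
      (ih fun i hi => h i (Finset.mem_insert_of_mem hi))

lemma rigLe_mul_le_left (a b : A) : rigLe (a * b) a := by
  simpa using rigLe_mul (rigLe_refl a) (rigLe_one hint b)

lemma rigLe_key (u x : A) (m n : ℕ) : rigLe ((u + x) ^ (m + n)) (u ^ m + x ^ n) := by
  rw [add_pow]
  apply rigLe_sum hint
  intro k _
  rcases le_or_gt m k with h | h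
  · have hk : u ^ k = u ^ m * u ^ (k - m) := by rw [← pow_add, Nat.add_sub_cancel' h]
    rw [hk, mul_assoc, mul_assoc]
    exact rigLe_trans (rigLe_mul_le_left hint _ _) (rigLe_add_right _ _)
  · have hn : n ≤ m + n - k := by omega
    have hx : x ^ (m + n - k) = x ^ n * x ^ (m + n - k - n) := by
      rw [← pow_add, Nat.add_sub_cancel' hn]
    have heq : u ^ k * (x ^ n * x ^ (m + n - k - n)) * ((m + n).choose k : A)
        = x ^ n * (u ^ k * x ^ (m + n - k - n) * ((m + n).choose k : A)) := by ring
    rw [hx, heq]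
    exact rigLe_trans (rigLe_mul_le_left hint _ _) (rigLe_add_left _ _)

omit hint in lemma preceq_refl (x : A) : preceq x x := ⟨1, by simpa using rigLe_refl x⟩

omit hint in lemma preceq_trans {x y z : A} : preceq x y → preceq y z → preceq x z
  | ⟨m, h1⟩, ⟨n, h2⟩ =>
    ⟨m * n, by rw [pow_mul]; exact rigLe_trans (rigLe_pow h1 n) h2⟩

lemma preceq_add {u v x y : A} : preceq u v → preceq x y → preceq (u + x) (v + y)
  | ⟨m, h1⟩, ⟨n, h2⟩ =>
    ⟨m + n, rigLe_trans (rigLe_key hint u x m n) (rigLe_add h1 h2)⟩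

lemma preceq_mul {u v x y : A} : preceq u v → preceq x y → preceq (u * x) (v * y)
  | ⟨m, h1⟩, ⟨n, h2⟩ => by
    refine ⟨m + n, ?_⟩
    have heq : (u * x) ^ (m + n) = (u ^ m * x ^ n) * (u ^ n * x ^ m) := by
      rw [mul_pow, pow_add, pow_add]; ring
    rw [heq]
    exact rigLe_trans (rigLe_mul_le_left hint _ _) (rigLe_mul h1 h2)

end aux

/-- In an integral rig, `∼` is a rig congruence. -/
theorem simRel_congruence {A : Type*} [CommSemiring A]
    (hint : ∀ x : A, 1 + x = 1) :
    (∀ x : A, simRel x x) ∧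
    (∀ x y : A, simRel x y → simRel y x) ∧
    (∀ x y z : A, simRel x y → simRel y z → simRel x z) ∧
    (∀ u v x y : A, simRel u v → simRel x y → simRel (u + x) (v + y)) ∧
    (∀ u v x y : A, simRel u v → simRel x y → simRel (u * x) (v * y)) := by
  refine ⟨fun x => ⟨preceq_refl x, preceq_refl x⟩,
    fun x y h => ⟨h.2, h.1⟩,
    fun x y z h1 h2 => ⟨preceq_trans h1.1 h2.1, preceq_trans h2.2 h1.2⟩,
    fun u v x y h1 h2 => ⟨preceq_add hint h1.1 h2.1, preceq_add hint h1.2 h2.2⟩,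
    fun u v x y h1 h2 => ⟨preceq_mul hint h1.1 h2.1, preceq_mul hint h1.2 h2.2⟩⟩
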